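/- For every vertex v, the AoI process is piecewise determined by the surviving indices: for every integer t ≥ 0, (i) if t < τ₁(v) then A(v,t) = A₀ + t; (ii) if τ_j(v) ≤ t < τ_{j+1}(v) for some 1 ≤ j ≤ k_v − 1, then A(v,t) = 1 + t − t_{i_j}; (iii) if t ≥ τ_{k_v}(v) then A(v,t) = 1 + t − t_k. -/
import Mathlib


open Finset

def tsel (Δ j : ℕ) : ℕ := (j - 1) * Δ + 1

noncomputable def AoI {V : Type*} (G : SimpleGraph V) (s : ℕ → V) (Δ k A0 : ℕ) (v : V) :
    ℕ → ℕ
  | 0 => A0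
  | t + 1 =>
    let prev := AoI G s Δ k A0 v t
    let Ω : Finset ℕ := (Finset.Icc 1 k).filter
      (fun j => t + 1 = tsel Δ j + G.dist (s j) v ∧ G.dist (s j) v + 1 ≤ prev)
    if h : Ω.Nonempty then Ω.inf' h (fun j => 1 + G.dist (s j) v) else prev + 1

noncomputable def AoIR {V : Type*} (G : SimpleGraph V) (s : ℕ → V) (Δ k A0 : ℕ) (v : V)
    (t : ℝ) : ℝ :=
  (AoI G s Δ k A0 v ⌊t⌋₊ : ℝ) + (t - ⌊t⌋₊)

open scoped Classical in
noncomputable def Dset {V : Type*} (G : SimpleGraph V) (s : ℕ → V) (Δ k : ℕ) (v : V) :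
    Finset ℕ :=
  (Finset.Icc 1 k).filter (fun x => ∀ y ∈ Finset.Icc 1 k, x < y →
    tsel Δ x + G.dist (s x) v < tsel Δ y + G.dist (s y) v)


lemma tsel_lt {Δ a b : ℕ} (hΔ : 1 ≤ Δ) (ha : 1 ≤ a) (hab : a < b) :
    tsel Δ a < tsel Δ b := by
  unfold tsel
  have h1 : (a - 1 + 1) * Δ ≤ (b - 1) * Δ := Nat.mul_le_mul_right Δ (by omega)
  have h2 : (a - 1) * Δ + Δ = (a - 1 + 1) * Δ := by ring
  omega

lemma tsel_le {Δ a b : ℕ} (hΔ : 1 ≤ Δ) (ha : 1 ≤ a) (hab : a ≤ b) :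
    tsel Δ a ≤ tsel Δ b := by
  rcases eq_or_lt_of_le hab with rfl | h
  · exact le_refl _
  · exact (tsel_lt hΔ ha h).le

lemma AoI_master {V : Type*} (G : SimpleGraph V) (s : ℕ → V) (Δ k A0 : ℕ)
    (hΔ : 1 ≤ Δ) (hA0 : 1 ≤ A0) (v : V) (t : ℕ) :
    ((∀ j ∈ Finset.Icc 1 k, t < tsel Δ j + G.dist (s j) v) →
      AoI G s Δ k A0 v t = A0 + t) ∧
    (∀ m ∈ Finset.Icc 1 k, tsel Δ m + G.dist (s m) v ≤ t →
      (∀ x ∈ Finset.Icc 1 k, tsel Δ x + G.dist (s x) v ≤ t → x ≤ m) →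
      AoI G s Δ k A0 v t + tsel Δ m = t + 1) := by
  induction t with
  | zero =>
    constructor
    · intro _; rfl
    · intro m hm hτ _
      have : 1 ≤ tsel Δ m := Nat.le_add_left 1 _
      omega
  | succ t ih =>
    have hrec : AoI G s Δ k A0 v (t+1) =
        (let prev := AoI G s Δ k A0 v t
        let Ω : Finset ℕ := (Finset.Icc 1 k).filter
          (fun j => t + 1 = tsel Δ j + G.dist (s j) v ∧ G.dist (s j) v + 1 ≤ prev)
        if h : Ω.Nonempty then Ω.inf' h (fun j => 1 + G.dist (s j) v) else prev + 1) := by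
      rw [AoI]
    set prev := AoI G s Δ k A0 v t with hprev
    set Ω : Finset ℕ := (Finset.Icc 1 k).filter
      (fun j => t + 1 = tsel Δ j + G.dist (s j) v ∧ G.dist (s j) v + 1 ≤ prev) with hΩ
    simp only at hrec
    constructor
    · -- all arrivals in the future
      intro hfut
      have hΩe : ¬ Ω.Nonempty := by
        rintro ⟨j, hj⟩
        rw [hΩ, Finset.mem_filter] at hj
        exact absurd hj.2.1.symm.le (not_le.mpr (hfut j hj.1))
      rw [hrec, dif_neg hΩe]
      have hft : ∀ j ∈ Finset.Icc 1 k, t < tsel Δ j + G.dist (s j) v := by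
        intro j hj; exact lt_of_le_of_lt (Nat.le_succ t) (hfut j hj)
      rw [ih.1 hft]
      omega
    · intro m hm hτm hmax
      have hm1 : 1 ≤ m := (Finset.mem_Icc.mp hm).1
      have htselm : 1 ≤ tsel Δ m := Nat.le_add_left 1 _
      rcases lt_or_eq_of_le hτm with hc | hc
      · -- τ m ≤ t, no update at t+1
        have hτm' : tsel Δ m + G.dist (s m) v ≤ t := by omega
        have hIH : prev + tsel Δ m = t + 1 := by
          apply ih.2 m hm hτm'
          intro x hx hxt; exact hmax x hx (by omega)
        have hΩe : ¬ Ω.Nonempty := by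
          rintro ⟨j, hj⟩
          rw [hΩ, Finset.mem_filter] at hj
          obtain ⟨hjIcc, hjτ, hjd⟩ := hj
          have hj1 : 1 ≤ j := (Finset.mem_Icc.mp hjIcc).1
          have hjm : j ≤ m := hmax j hjIcc hjτ.symm.le
          have hne : j ≠ m := by intro h; subst h; omega
          have : tsel Δ j < tsel Δ m := tsel_lt hΔ hj1 (lt_of_le_of_ne hjm hne)
          omega
        rw [hrec, dif_neg hΩe]
        omega
      · -- τ m = t + 1, update at m
        -- first: dist m + 1 ≤ prev
        have hdm : G.dist (s m) v + 1 ≤ prev := by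
          by_cases hex : ∃ j ∈ Finset.Icc 1 k, tsel Δ j + G.dist (s j) v ≤ t
          · obtain ⟨j0, hj0, hj0t⟩ := hex
            have hFne : ((Finset.Icc 1 k).filter
                (fun j => tsel Δ j + G.dist (s j) v ≤ t)).Nonempty :=
              ⟨j0, Finset.mem_filter.mpr ⟨hj0, hj0t⟩⟩
            obtain ⟨m', hm'F, hm'max⟩ : ∃ m' ∈ (Finset.Icc 1 k).filter
                (fun j => tsel Δ j + G.dist (s j) v ≤ t),
                ∀ x ∈ (Finset.Icc 1 k).filter
                  (fun j => tsel Δ j + G.dist (s j) v ≤ t), x ≤ m' :=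
              ⟨_, Finset.max'_mem _ hFne, fun x hx => Finset.le_max' _ x hx⟩
            rw [Finset.mem_filter] at hm'F
            have hIH : prev + tsel Δ m' = t + 1 := by
              apply ih.2 m' hm'F.1 hm'F.2
              intro x hx hxt
              exact hm'max x (Finset.mem_filter.mpr ⟨hx, hxt⟩)
            have hm'1 : 1 ≤ m' := (Finset.mem_Icc.mp hm'F.1).1
            have hm'm : m' ≤ m := hmax m' hm'F.1 (by omega)
            have hne : m' ≠ m := by intro h; rw [h] at hm'F; omega
            have : tsel Δ m' < tsel Δ m := tsel_lt hΔ hm'1 (lt_of_le_of_ne hm'm hne)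
            omega
          · push_neg at hex
            have : prev = A0 + t := ih.1 (fun j hj => hex j hj)
            omega
        have hmΩ : m ∈ Ω := by
          rw [hΩ, Finset.mem_filter]
          exact ⟨hm, hc.symm, hdm⟩
        have hΩne : Ω.Nonempty := ⟨m, hmΩ⟩
        rw [hrec, dif_pos hΩne]
        have heq : Ω.inf' hΩne (fun j => 1 + G.dist (s j) v) = 1 + G.dist (s m) v := by
          apply le_antisymm
          · exact Finset.inf'_le _ hmΩ
          · apply Finset.le_inf'
            intro j hj
            rw [hΩ, Finset.mem_filter] at hj
            obtain ⟨hjIcc, hjτ, _⟩ := hj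
            have hj1 : 1 ≤ j := (Finset.mem_Icc.mp hjIcc).1
            have hjm : j ≤ m := hmax j hjIcc hjτ.symm.le
            have : tsel Δ j ≤ tsel Δ m := tsel_le hΔ hj1 hjm
            omega
        rw [heq]
        omega

theorem stmt3 {V : Type*} [Fintype V] (G : SimpleGraph V) (hconn : G.Connected)
    (s : ℕ → V) (Δ k A0 : ℕ) (hΔ : 1 ≤ Δ) (hk : 1 ≤ k) (hA0 : 1 ≤ A0)
    (v : V) (i : ℕ → ℕ) (kv : ℕ) (hkv : kv = (Dset G s Δ k v).card)
    (hi0 : i 0 = 1)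
    (hmono : StrictMonoOn i (Set.Icc 1 kv))
    (him : Dset G s Δ k v = (Finset.Icc 1 kv).image i)
    (t : ℕ) :
    (t < tsel Δ (i 1) + G.dist (s (i 1)) v → AoI G s Δ k A0 v t = A0 + t) ∧
    (∀ j, 1 ≤ j → j ≤ kv - 1 →
      tsel Δ (i j) + G.dist (s (i j)) v ≤ t →
      t < tsel Δ (i (j + 1)) + G.dist (s (i (j + 1))) v →
      AoI G s Δ k A0 v t = 1 + t - tsel Δ (i j)) ∧
    (tsel Δ (i kv) + G.dist (s (i kv)) v ≤ t →
      AoI G s Δ k A0 v t = 1 + t - tsel Δ k) := by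
  obtain ⟨h1M, h2M⟩ := AoI_master G s Δ k A0 hΔ hA0 v t
  have hDspec : ∀ x, x ∈ Dset G s Δ k v ↔ (x ∈ Finset.Icc 1 k ∧
      ∀ y ∈ Finset.Icc 1 k, x < y →
        tsel Δ x + G.dist (s x) v < tsel Δ y + G.dist (s y) v) := by
    intro x
    simp only [Dset, Finset.mem_filter]
  have hmemD : ∀ l, 1 ≤ l → l ≤ kv → i l ∈ Dset G s Δ k v := by
    intro l hl1 hl2
    rw [him]
    exact Finset.mem_image.mpr ⟨l, Finset.mem_Icc.mpr ⟨hl1, hl2⟩, rfl⟩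
  have hkD : k ∈ Dset G s Δ k v := by
    rw [hDspec]
    refine ⟨Finset.mem_Icc.mpr ⟨hk, le_refl k⟩, fun y hy hky => ?_⟩
    exact absurd (Finset.mem_Icc.mp hy).2 (by omega)
  have hkvpos : 1 ≤ kv := by
    rw [hkv]
    exact Finset.card_pos.mpr ⟨k, hkD⟩
  have hτmono : ∀ a b, 1 ≤ a → a < b → b ≤ kv →
      tsel Δ (i a) + G.dist (s (i a)) v < tsel Δ (i b) + G.dist (s (i b)) v := by
    intro a b ha hab hb
    have hiaD := hmemD a ha (by omega)
    have hibD := hmemD b (by omega) hb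
    have hibIcc : i b ∈ Finset.Icc 1 k := ((hDspec _).mp hibD).1
    have hiab : i a < i b := hmono ⟨ha, by omega⟩ ⟨by omega, hb⟩ hab
    exact ((hDspec _).mp hiaD).2 (i b) hibIcc hiab
  have hτle : ∀ a b, 1 ≤ a → a ≤ b → b ≤ kv →
      tsel Δ (i a) + G.dist (s (i a)) v ≤ tsel Δ (i b) + G.dist (s (i b)) v := by
    intro a b ha hab hb
    rcases eq_or_lt_of_le hab with rfl | h
    · exact le_refl _
    · exact (hτmono a b ha h hb).le
  have hik : i kv = k := by
    obtain ⟨l, hl, hlk⟩ := Finset.mem_image.mp (him ▸ hkD)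
    rw [Finset.mem_Icc] at hl
    have h1 : i l ≤ i kv :=
      hmono.monotoneOn ⟨hl.1, hl.2⟩ ⟨hkvpos, le_refl kv⟩ hl.2
    have hkvD := hmemD kv hkvpos (le_refl kv)
    have h2 : i kv ≤ k := (Finset.mem_Icc.mp ((hDspec _).mp hkvD).1).2
    omega
  have hsurv : ∀ t' : ℕ, (∃ j ∈ Finset.Icc 1 k, tsel Δ j + G.dist (s j) v ≤ t') →
      ∃ l, 1 ≤ l ∧ l ≤ kv ∧ tsel Δ (i l) + G.dist (s (i l)) v ≤ t' ∧
        ∀ x ∈ Finset.Icc 1 k, tsel Δ x + G.dist (s x) v ≤ t' → x ≤ i l := by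
    intro t' ⟨j0, hj0, hj0t⟩
    have hFne : ((Finset.Icc 1 k).filter
        (fun j => tsel Δ j + G.dist (s j) v ≤ t')).Nonempty :=
      ⟨j0, Finset.mem_filter.mpr ⟨hj0, hj0t⟩⟩
    obtain ⟨m, hmF, hmmax⟩ : ∃ m ∈ (Finset.Icc 1 k).filter
        (fun j => tsel Δ j + G.dist (s j) v ≤ t'),
        ∀ x ∈ (Finset.Icc 1 k).filter
          (fun j => tsel Δ j + G.dist (s j) v ≤ t'), x ≤ m :=
      ⟨_, Finset.max'_mem _ hFne, fun x hx => Finset.le_max' _ x hx⟩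
    rw [Finset.mem_filter] at hmF
    have hmax' : ∀ x ∈ Finset.Icc 1 k, tsel Δ x + G.dist (s x) v ≤ t' → x ≤ m :=
      fun x hx hxt => hmmax x (Finset.mem_filter.mpr ⟨hx, hxt⟩)
    have hmD : m ∈ Dset G s Δ k v := by
      rw [hDspec]
      refine ⟨hmF.1, fun y hy hmy => ?_⟩
      by_cases hyt : tsel Δ y + G.dist (s y) v ≤ t'
      · exact absurd (hmax' y hy hyt) (by omega)
      · omega
    obtain ⟨l, hl, hlm⟩ := Finset.mem_image.mp (him ▸ hmD)
    rw [Finset.mem_Icc] at hl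
    exact ⟨l, hl.1, hl.2, hlm ▸ hmF.2, hlm ▸ hmax'⟩
  refine ⟨?_, ?_, ?_⟩
  · -- part (i)
    intro ht
    apply h1M
    intro j' hj'
    by_contra h
    push_neg at h
    obtain ⟨l, hl1, hlkv, hlle, _⟩ := hsurv t ⟨j', hj', h⟩
    have := hτle 1 l (le_refl 1) hl1 hlkv
    omega
  · -- part (ii)
    intro j hj1 hj2 hle hlt
    have hjkv : j + 1 ≤ kv := by omega
    have hijD := hmemD j hj1 (by omega)
    have hijIcc : i j ∈ Finset.Icc 1 k := ((hDspec _).mp hijD).1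
    obtain ⟨l, hl1, hlkv, hlle, hlmax⟩ := hsurv t ⟨i j, hijIcc, hle⟩
    have hlj : l ≤ j := by
      by_contra h
      push_neg at h
      have := hτle (j + 1) l (by omega) (by omega) hlkv
      omega
    have ha : i j ≤ i l := hlmax (i j) hijIcc hle
    have hb : i l ≤ i j := hmono.monotoneOn ⟨hl1, hlkv⟩ ⟨hj1, by omega⟩ hlj
    have heq : i l = i j := le_antisymm hb ha
    rw [heq] at hlmax
    have hIH := h2M (i j) hijIcc hle hlmax
    have htsel1 : 1 ≤ tsel Δ (i j) := Nat.le_add_left 1 _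
    omega
  · -- part (iii)
    intro hle
    rw [hik] at hle
    have hIH := h2M k (Finset.mem_Icc.mpr ⟨hk, le_refl k⟩) hle
      (fun x hx _ => (Finset.mem_Icc.mp hx).2)
    have htsel1 : 1 ≤ tsel Δ k := Nat.le_add_left 1 _
    omega
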